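/- (Unobservability corollary for pure VIO under straight-line motion.) Let R_GI and R_IC be real 3×3 rotation matrices, d, p_f, p₁, v₁, g ∈ ℝ³ with d ≠ 0. Then the vector N₁ ∈ (Fin 7) → (Fin 3 → ℝ) with blocks (0, 0, 0, 0, 0, R_IC.mulVec d, −S(p_f − p₁).mulVec (R_GI.mulVec d)) is nonzero (its rotational-extrinsic block R_IC.mulVec d is nonzero), and for EVERY time index along the straight-line trajectory — i.e., for every δt ∈ ℝ, every q ∈ ℝ³ with q ×₃ d = 0, every p_k = p₁ + R_GI.mulVec q, and every choice of 3×3 matrices Φ₁₂, Φ₅₂ — the block row Ξ = [Γ₁, Γ₂, −δt•1, Γ₃, −1, Γ₄, 1] (with Γ₁ = S(p_f − p₁ − δt•v₁ + (δt²/2)•g) * R_GI, Γ₂ = S(p_f − p_k) * R_GI * Φ₁₂ − Φ₅₂, Γ₃ = (δt²/2)•R_GI, Γ₄ = S(p_f − p_k) * R_GI * R_ICᵀ) satisfies Ξ · N₁ = 0. Hence the stacked observability matrix has a nontrivial right null space involving the rotational extrinsic parameter. -/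

import Mathlib

open Matrix

/-- The skew-symmetric (cross-product) matrix of a vector in ℝ³. -/
def skew (v : Fin 3 → ℝ) : Matrix (Fin 3) (Fin 3) ℝ :=
  !![0, -v 2, v 1; v 2, 0, -v 0; -v 1, v 0, 0]

/-- The candidate unobservable direction `N₁` for pure VIO under straight-line motion. -/
def N₁ (R_GI R_IC : Matrix (Fin 3) (Fin 3) ℝ) (d pf p₁ : Fin 3 → ℝ) :
    Fin 7 → (Fin 3 → ℝ) :=
  ![0, 0, 0, 0, 0, R_IC.mulVec d, -(skew (pf - p₁)).mulVec (R_GI.mulVec d)]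

lemma skew_mulVec (v w : Fin 3 → ℝ) : (skew v).mulVec w = v ⨯₃ w := by
  funext i
  fin_cases i <;>
    simp [skew, crossProduct, Matrix.mulVec, dotProduct, Fin.sum_univ_three] <;> ring

/-- Unobservability corollary for pure VIO under straight-line motion: `N₁` is nonzero
(its rotational-extrinsic block `R_IC d` is nonzero), and every block row
`Ξ = [Γ₁, Γ₂, −δt•1, Γ₃, −1, Γ₄, 1]` of the stacked observability matrix along the
straight-line trajectory annihilates it. -/
theorem unobservable_direction_pure_vio_straight_line
    (R_GI R_IC : Matrix (Fin 3) (Fin 3) ℝ)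
    (hGI : R_GIᵀ * R_GI = 1) (hGIdet : R_GI.det = 1)
    (hIC : R_ICᵀ * R_IC = 1) (hICdet : R_IC.det = 1)
    (d pf p₁ v₁ g : Fin 3 → ℝ) (hd : d ≠ 0) :
    R_IC.mulVec d ≠ 0
    ∧ N₁ R_GI R_IC d pf p₁ ≠ 0
    ∧ ∀ (δt : ℝ) (q pk : Fin 3 → ℝ) (Φ₁₂ Φ₅₂ : Matrix (Fin 3) (Fin 3) ℝ),
        q ⨯₃ d = 0 → pk = p₁ + R_GI.mulVec q →
        (skew (pf - p₁ - δt • v₁ + (δt ^ 2 / 2) • g) * R_GI).mulVec (N₁ R_GI R_IC d pf p₁ 0)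
          + (skew (pf - pk) * R_GI * Φ₁₂ - Φ₅₂).mulVec (N₁ R_GI R_IC d pf p₁ 1)
          + ((-δt) • (1 : Matrix (Fin 3) (Fin 3) ℝ)).mulVec (N₁ R_GI R_IC d pf p₁ 2)
          + ((δt ^ 2 / 2) • R_GI).mulVec (N₁ R_GI R_IC d pf p₁ 3)
          + (-(1 : Matrix (Fin 3) (Fin 3) ℝ)).mulVec (N₁ R_GI R_IC d pf p₁ 4)
          + (skew (pf - pk) * R_GI * R_ICᵀ).mulVec (N₁ R_GI R_IC d pf p₁ 5)
          + (1 : Matrix (Fin 3) (Fin 3) ℝ).mulVec (N₁ R_GI R_IC d pf p₁ 6) = 0 := by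
  have hICd : R_IC.mulVec d ≠ 0 := by
    intro h
    apply hd
    have := congrArg (R_ICᵀ.mulVec) h
    rwa [Matrix.mulVec_mulVec, hIC, Matrix.one_mulVec, Matrix.mulVec_zero] at this
  refine ⟨hICd, fun h => hICd (by simpa [N₁] using congrFun h 5), ?_⟩
  intro δt q pk Φ₁₂ Φ₅₂ hq hpk
  -- q is a multiple of d
  obtain ⟨c, hc⟩ : ∃ c : ℝ, q = c • d := by
    have hdq : (crossProduct d) q = 0 := by rw [← cross_anticomm, hq, neg_zero]
    have hnli : ¬ LinearIndependent ℝ ![d, q] := by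
      rw [← crossProduct_ne_zero_iff_linearIndependent]
      simpa using hdq
    rw [LinearIndependent.pair_iff' hd] at hnli
    push_neg at hnli
    obtain ⟨a, ha⟩ := hnli
    exact ⟨a, ha.symm⟩
  have h5 : (N₁ R_GI R_IC d pf p₁ 5) = R_IC.mulVec d := rfl
  have h6 : (N₁ R_GI R_IC d pf p₁ 6) = -(skew (pf - p₁)).mulVec (R_GI.mulVec d) := rfl
  have hz0 : (N₁ R_GI R_IC d pf p₁ 0) = 0 := rfl
  have hz1 : (N₁ R_GI R_IC d pf p₁ 1) = 0 := rfl
  have hz2 : (N₁ R_GI R_IC d pf p₁ 2) = 0 := rfl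
  have hz3 : (N₁ R_GI R_IC d pf p₁ 3) = 0 := rfl
  have hz4 : (N₁ R_GI R_IC d pf p₁ 4) = 0 := rfl
  rw [hz0, hz1, hz2, hz3, hz4, h5, h6]
  simp only [Matrix.mulVec_zero, zero_add, add_zero]
  have key : (skew (pf - pk) * R_GI * R_ICᵀ).mulVec (R_IC.mulVec d)
      = (skew (pf - p₁)).mulVec (R_GI.mulVec d) := by
    rw [Matrix.mulVec_mulVec, Matrix.mul_assoc, Matrix.mul_assoc, hIC, Matrix.mul_one,
      ← Matrix.mulVec_mulVec, skew_mulVec, skew_mulVec, hpk, hc]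
    have : pf - (p₁ + R_GI.mulVec (c • d)) = (pf - p₁) - c • R_GI.mulVec d := by
      rw [Matrix.mulVec_smul]; abel
    rw [this, map_sub, LinearMap.sub_apply]
    have h0 : (crossProduct (c • R_GI.mulVec d)) (R_GI.mulVec d) = 0 := by
      rw [LinearMap.map_smul, LinearMap.smul_apply, cross_self, smul_zero]
    rw [h0, sub_zero]
  rw [Matrix.one_mulVec, key]
  abel
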